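/- arXiv:0912.3188 — 3 statements merged into one kernel-verified Lean document; each statement's English description precedes it below -/
import Mathlib

section
/- Let (V,d) be a finite metric space, ω : V → ℝ≥0, and M ≥ 0. For r ∈ V define T(r) = {v ∈ V : v ≠ r ∧ ω(r)·d(v,r) ≤ M} and S(r) = {v ∈ V : v ≠ r ∧ ω(r)·d(v,r) ≤ 2M}. Let r₁,…,r_k be a sequence of distinct points such that ω(r₁) ≥ ω(r₂) ≥ … ≥ ω(r_k), and let idx ⊆ {1,…,k} be a set of indices such that for all i, j ∈ idx with i < j, r_i ∉ S(r_j) and r_j ∉ S(r_i). Then the sets {T(r_i)}_{i ∈ idx} are pairwise disjoint. -/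
/-- the feasible-backup sets of selected servers are pairwise disjoint. -/
theorem stmt_1 {V : Type*} [MetricSpace V] [Fintype V]
    (ω : V → ℝ) (hω : ∀ v, 0 ≤ ω v) (M : ℝ) (hM : 0 ≤ M)
    (T S : V → Set V)
    (hT : ∀ r, T r = {v : V | v ≠ r ∧ ω r * dist v r ≤ M})
    (hS : ∀ r, S r = {v : V | v ≠ r ∧ ω r * dist v r ≤ 2 * M})
    (k : ℕ) (r : Fin k → V) (hinj : Function.Injective r)
    (hmono : ∀ i j : Fin k, i ≤ j → ω (r j) ≤ ω (r i))
    (idx : Finset (Fin k))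
    (hsep : ∀ i ∈ idx, ∀ j ∈ idx, i < j → r i ∉ S (r j) ∧ r j ∉ S (r i)) :
    ∀ i ∈ idx, ∀ j ∈ idx, i ≠ j → Disjoint (T (r i)) (T (r j)) := by
  have key : ∀ i ∈ idx, ∀ j ∈ idx, i < j → Disjoint (T (r i)) (T (r j)) := by
    intro i hi j hj hij
    rw [Set.disjoint_left]
    intro v hvi hvj
    rw [hT] at hvi hvj
    obtain ⟨hvi1, hvi2⟩ := hvi
    obtain ⟨hvj1, hvj2⟩ := hvj
    have hne : r i ≠ r j := fun h => (Nat.lt_irrefl _ (hinj h ▸ hij : i < i)).elim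
    have hmem : r i ∈ S (r j) := by
      rw [hS]
      refine ⟨hne, ?_⟩
      have htri : dist (r i) (r j) ≤ dist v (r i) + dist v (r j) := by
        calc dist (r i) (r j) ≤ dist (r i) v + dist v (r j) := dist_triangle _ _ _
        _ = dist v (r i) + dist v (r j) := by rw [dist_comm]
      have h1 : ω (r j) * dist (r i) (r j) ≤ ω (r j) * dist v (r i) + ω (r j) * dist v (r j) := by
        nlinarith [hω (r j), dist_nonneg (x := v) (y := r j)]
      have h2 : ω (r j) * dist v (r i) ≤ ω (r i) * dist v (r i) :=
        mul_le_mul_of_nonneg_right (hmono i j hij.le) dist_nonneg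
      linarith
    exact (hsep i hi j hj hij).1 hmem
  intro i hi j hj hij
  rcases lt_or_gt_of_ne hij with h | h
  · exact key i hi j hj h
  · exact (key j hj i hi h).symm
end

section
/- Let (V,d) be a finite metric space with demands ω : V → ℝ≥0, opening costs f : V → ℝ≥0, and n = |V|. For R ⊆ V nonempty define C_ship(R) = ∑_{v ∈ V} ω(v)·d(v,R) with d(v,R) = min_{r∈R} d(v,r), C_facil(R) = ∑_{r∈R} f(r), C_UFL(R) = C_facil(R) + C_ship(R), and for R with |R| ≥ 2 define C_RFTFL(R) = C_facil(R) + max_{r ∈ R} C_ship(R∖{r}). Let R₁ ⊆ V be nonempty, and assign each v ∈ V to a nearest server σ(v) ∈ R₁ (so d(v,σ(v)) = d(v,R₁)). Define ω'(r) = ∑_{v : σ(v)=r} ω(v) for r ∈ R₁. Then for the optimal RFTFL solution R* (with |R₁ ∪ R*| ≥ 2 and R₁ ∪ R* ∖ {r} nonempty for all r ∈ R₁): max_{r ∈ R₁} ω'(r)·d(r, (R₁∪R*)∖{r}) ≤ C_ship(R₁) + max_{r ∈ R₁} ∑_{v∈V} ω(v)·d(v, (R₁∪R*)∖{r}). -/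
/-- Distance from a point to a finite set (0 if the set is empty). -/
noncomputable def ddist {V : Type*} [MetricSpace V] (x : V) (S : Finset V) : ℝ :=
  if h : S.Nonempty then S.inf' h (fun s => dist x s) else 0

/-- The robust fault-tolerant facility location cost of a set `R`. -/
noncomputable def CRFTFL {V : Type*} [MetricSpace V] [Fintype V] [DecidableEq V]
    (f ω : V → ℝ) (R : Finset V) : ℝ :=
  (∑ r ∈ R, f r) +
    if h : R.Nonempty then
      R.sup' h (fun r => ∑ v : V, ω v * ddist v (R.erase r))
    else 0

lemma ddist_nonneg' {V : Type*} [MetricSpace V] (x : V) (S : Finset V) : 0 ≤ ddist x S := by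
  unfold ddist
  split
  · next h => exact Finset.le_inf' h _ (fun s _ => dist_nonneg)
  · exact le_refl 0

lemma ddist_triangle' {V : Type*} [MetricSpace V] (x y : V) (S : Finset V) (h : S.Nonempty) :
    ddist x S ≤ dist x y + ddist y S := by
  unfold ddist
  rw [dif_pos h, dif_pos h]
  obtain ⟨s, hs, hse⟩ := S.exists_mem_eq_inf' h (fun s => dist y s)
  rw [hse]
  exact le_trans (Finset.inf'_le _ hs) (dist_triangle x y s)

/-- backup-cost bound of Lemma 3.6. -/
theorem stmt_7 {V : Type*} [MetricSpace V] [Fintype V] [DecidableEq V]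
    (ω f : V → ℝ) (hω : ∀ v, 0 ≤ ω v) (hf : ∀ v, 0 ≤ f v)
    (R₁ : Finset V) (h₁ : R₁.Nonempty)
    (σ : V → V) (hσ : ∀ v, σ v ∈ R₁ ∧ dist v (σ v) = ddist v R₁)
    (ω' : V → ℝ) (hω' : ∀ r, ω' r = ∑ v ∈ Finset.univ.filter (fun v => σ v = r), ω v)
    (Rstar : Finset V)
    (hopt : ∀ R' : Finset V, 2 ≤ R'.card → CRFTFL f ω Rstar ≤ CRFTFL f ω R')
    (hcard : 2 ≤ (R₁ ∪ Rstar).card)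
    (hne : ∀ r ∈ R₁, ((R₁ ∪ Rstar).erase r).Nonempty) :
    R₁.sup' h₁ (fun r => ω' r * ddist r ((R₁ ∪ Rstar).erase r)) ≤
      (∑ v : V, ω v * ddist v R₁) +
      R₁.sup' h₁ (fun r => ∑ v : V, ω v * ddist v ((R₁ ∪ Rstar).erase r)) := by
  apply Finset.sup'_le
  intro r hr
  have hS := hne r hr
  set S := (R₁ ∪ Rstar).erase r with hSdef
  have key : ω' r * ddist r S ≤
      ∑ v : V, (ω v * ddist v R₁ + ω v * ddist v S) := by
    rw [hω' r, Finset.sum_mul]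
    calc ∑ v ∈ Finset.univ.filter (fun v => σ v = r), ω v * ddist r S
        ≤ ∑ v ∈ Finset.univ.filter (fun v => σ v = r),
            (ω v * ddist v R₁ + ω v * ddist v S) := by
          apply Finset.sum_le_sum
          intro v hv
          have hvr : σ v = r := (Finset.mem_filter.mp hv).2
          have htri : ddist r S ≤ dist r v + ddist v S := ddist_triangle' r v S hS
          have hdr : dist r v = ddist v R₁ := by
            rw [dist_comm, ← hvr]; exact (hσ v).2
          rw [← mul_add]
          apply mul_le_mul_of_nonneg_left _ (hω v)
          rw [← hdr]; exact htri
      _ ≤ ∑ v : V, (ω v * ddist v R₁ + ω v * ddist v S) := by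
          apply Finset.sum_le_sum_of_subset_of_nonneg (Finset.subset_univ _)
          intro v _ _
          have := hω v
          have := ddist_nonneg' v R₁
          have := ddist_nonneg' v S
          positivity
  rw [Finset.sum_add_distrib] at key
  exact le_trans key (by
    gcongr
    exact Finset.le_sup' (fun r => ∑ v : V, ω v * ddist v ((R₁ ∪ Rstar).erase r)) hr)
end

section
/- Let (V,d) be a finite metric space with ω : V → ℝ≥0, and let R₁ ⊆ V, R* ⊆ V with R₁ ∪ R* having at least α+1 elements. Define M₀ = max_{F ⊆ V, |F| ≤ α} ∑_{r ∈ F ∩ R₁} ω(r)·d(r, (R₁∪R*)∖F). Then for every r ∈ R₁, |{v ∈ (R₁∪R*)∖{r} : ω(r)·d(r,v) ≤ M₀}| ≥ α. -/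
/-- feasibility claim inside Lemma 4.5: every server in R₁ has at least
α backups within weighted distance M₀. -/
theorem stmt_14 {V : Type*} [MetricSpace V] [Fintype V] [DecidableEq V]
    (ω : V → ℝ) (hω : ∀ v, 0 ≤ ω v)
    (α : ℕ) (hα : 1 ≤ α)
    (R₁ Rstar : Finset V) (hcard : α + 1 ≤ (R₁ ∪ Rstar).card)
    (M₀ : ℝ)
    (hM₀ : M₀ = ((Finset.univ : Finset V).powerset.filter (fun F => F.card ≤ α)).sup'
      ⟨∅, by simp⟩ (fun F => ∑ r ∈ F ∩ R₁, ω r * ddist r ((R₁ ∪ Rstar) \ F))) :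
    ∀ r ∈ R₁,
      α ≤ (((R₁ ∪ Rstar).erase r).filter (fun v => ω r * dist r v ≤ M₀)).card := by
  intro r hr
  have hrU : r ∈ R₁ ∪ Rstar := Finset.mem_union_left _ hr
  have hEmpty : (∅ : Finset V) ∈ Finset.univ.powerset.filter (fun F => F.card ≤ α) := by simp
  have hM0nonneg : 0 ≤ M₀ := by
    rw [hM₀]
    have := Finset.le_sup' (b := (∅ : Finset V))
      (f := fun F => ∑ r ∈ F ∩ R₁, ω r * ddist r ((R₁ ∪ Rstar) \ F)) hEmpty
    simpa using this
  by_cases hωr : ω r = 0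
  · have heq : ((R₁ ∪ Rstar).erase r).filter (fun v => ω r * dist r v ≤ M₀)
        = (R₁ ∪ Rstar).erase r := by
      apply Finset.filter_true_of_mem; intro v _; simp [hωr, hM0nonneg]
    rw [heq, Finset.card_erase_of_mem hrU]
    omega
  · by_contra hlt
    push_neg at hlt
    set B := ((R₁ ∪ Rstar).erase r).filter (fun v => ω r * dist r v ≤ M₀) with hB
    set F := insert r B with hF
    have hrB : r ∉ B := by simp [hB]
    have hFcard : F.card ≤ α := by
      rw [hF, Finset.card_insert_of_notMem hrB]; omega
    have hS : ((R₁ ∪ Rstar) \ F).Nonempty := by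
      rw [← Finset.card_pos]
      have h1 := Finset.le_card_sdiff F (R₁ ∪ Rstar)
      omega
    have hkey : ∀ v ∈ (R₁ ∪ Rstar) \ F, M₀ < ω r * dist r v := by
      intro v hv
      rw [Finset.mem_sdiff] at hv
      obtain ⟨hvU, hvF⟩ := hv
      have hvr : v ≠ r := by rintro rfl; exact hvF (by simp [hF])
      have hvB : v ∉ B := fun h => hvF (by simp [hF, h])
      by_contra hle
      push_neg at hle
      exact hvB (by simp [hB, Finset.mem_erase, hvr, hvU, hle])
    obtain ⟨v, hv, hvd⟩ := Finset.exists_mem_eq_inf' hS (fun v => dist r v)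
    have hdd : ddist r ((R₁ ∪ Rstar) \ F) = dist r v := by
      rw [ddist, dif_pos hS, hvd]
    have hterm : M₀ < ω r * ddist r ((R₁ ∪ Rstar) \ F) := by
      rw [hdd]; exact hkey v hv
    have hrF : r ∈ F ∩ R₁ := by simp [hF, hr]
    have hsum : ω r * ddist r ((R₁ ∪ Rstar) \ F)
        ≤ ∑ x ∈ F ∩ R₁, ω x * ddist x ((R₁ ∪ Rstar) \ F) := by
      apply Finset.single_le_sum (f := fun x => ω x * ddist x ((R₁ ∪ Rstar) \ F)) _ hrF
      intro x _
      apply mul_nonneg (hω x)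
      rw [ddist, dif_pos hS]
      exact Finset.le_inf' hS _ (fun b _ => dist_nonneg)
    have hFmem : F ∈ Finset.univ.powerset.filter (fun F => F.card ≤ α) := by
      simp [hFcard]
    have hle : ∑ x ∈ F ∩ R₁, ω x * ddist x ((R₁ ∪ Rstar) \ F) ≤ M₀ := by
      rw [hM₀]
      exact Finset.le_sup' (f := fun F => ∑ r ∈ F ∩ R₁, ω r * ddist r ((R₁ ∪ Rstar) \ F)) hFmem
    linarith
end
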